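/- As x → ∞, ∑_{1 ≤ n ≤ x/2} 1/(n² log²(x/n)) = (π²/6)·(1/log² x) + O(1/log³ x). -/

import Mathlib

set_option maxHeartbeats 1000000

open Filter Asymptotics


-- summability of (log n)^3 / n^2
lemma summable_logcube : Summable (fun n : ℕ => (Real.log n)^3 / (n:ℝ)^2) := by
  have hs : Summable (fun n : ℕ => (216:ℝ) * (1 / (n:ℝ)^(3/2 : ℝ))) :=
    (Real.summable_one_div_nat_rpow.mpr (by norm_num)).mul_left 216
  refine hs.of_nonneg_of_le (fun n => ?_) (fun n => ?_)
  · positivity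
  · rcases Nat.eq_zero_or_pos n with h | h
    · simp [h]
    · have hn1 : (1:ℝ) ≤ (n:ℝ) := by exact_mod_cast h
      have hn0 : (0:ℝ) < (n:ℝ) := by linarith
      have hlog : Real.log n ≤ 6 * (n:ℝ)^((1:ℝ)/6) := by
        have h1 : Real.log ((n:ℝ)^((1:ℝ)/6)) ≤ (n:ℝ)^((1:ℝ)/6) :=
          le_trans (Real.log_le_sub_one_of_pos (Real.rpow_pos_of_pos hn0 _)) (by linarith [Real.rpow_pos_of_pos hn0 ((1:ℝ)/6)])
        have h2 : Real.log ((n:ℝ)^((1:ℝ)/6)) = (1/6) * Real.log n := Real.log_rpow hn0 _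
        linarith [h2 ▸ h1]
      have hlp : (0:ℝ) ≤ Real.log n := Real.log_natCast_nonneg n
      have hcube : (Real.log n)^3 ≤ 216 * (n:ℝ)^((1:ℝ)/2) := by
        have := pow_le_pow_left₀ hlp hlog 3
        have hr : (6 * (n:ℝ)^((1:ℝ)/6))^3 = 216 * (n:ℝ)^((1:ℝ)/2) := by
          rw [mul_pow, ← Real.rpow_natCast ((n:ℝ)^((1:ℝ)/6)) 3, ← Real.rpow_mul hn0.le]
          norm_num
        linarith [hr ▸ this]
      rw [div_le_iff₀ (by positivity), mul_comm (216:ℝ), mul_assoc, div_mul_eq_mul_div, le_div_iff₀ (by positivity), one_mul]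
      calc (Real.log n)^3 * (n:ℝ)^((3:ℝ)/2) ≤ 216 * (n:ℝ)^((1:ℝ)/2) * (n:ℝ)^((3:ℝ)/2) := by
            apply mul_le_mul_of_nonneg_right hcube (by positivity)
        _ = 216 * (n:ℝ)^2 := by
            rw [mul_assoc, ← Real.rpow_add hn0, show (1:ℝ)/2 + 3/2 = ((2:ℕ):ℝ) by norm_num,
              Real.rpow_natCast]


lemma term_bound {x : ℝ} (hx : 4 ≤ x) {n : ℕ} (h1 : 1 ≤ n) (h2 : (n:ℝ) ≤ x/2) :
    0 ≤ 1 / ((n : ℝ) ^ 2 * (Real.log (x / n)) ^ 2) - 1 / ((n:ℝ)^2 * (Real.log x)^2) ∧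
    1 / ((n : ℝ) ^ 2 * (Real.log (x / n)) ^ 2) - 1 / ((n:ℝ)^2 * (Real.log x)^2) ≤
      (8 / Real.log 2 ^ 2) * ((Real.log n)^3 / (n:ℝ)^2) / (Real.log x)^3 := by
  have hn0 : (0:ℝ) < (n:ℝ) := by exact_mod_cast h1
  have hx0 : (0:ℝ) < x := by linarith
  set L := Real.log x with hLdef
  set a := Real.log n with hadef
  set c := Real.log 2 with hcdef
  have hc : 0 < c := Real.log_pos (by norm_num)
  have ha0 : 0 ≤ a := Real.log_natCast_nonneg n
  have hxn2 : (2:ℝ) ≤ x / n := by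
    rw [le_div_iff₀ hn0]; linarith
  have hldiv : Real.log (x / n) = L - a := Real.log_div (by linarith) (by positivity)
  set l := L - a with hldef
  have hcl : c ≤ l := by rw [← hldiv, hcdef]; exact Real.log_le_log (by norm_num) hxn2
  have hl0 : 0 < l := lt_of_lt_of_le hc hcl
  have hlL : l ≤ L := by simp [hldef]; linarith
  have hL0 : 0 < L := lt_of_lt_of_le hl0 hlL
  have hm : (0:ℝ) < (n:ℝ)^2 := by positivity
  clear_value L a c l
  rw [hldiv]
  constructor
  · have hsq : l^2 ≤ L^2 := by nlinarith
    have h1' : (n:ℝ)^2 * l^2 ≤ (n:ℝ)^2 * L^2 := mul_le_mul_of_nonneg_left hsq hm.le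
    have := one_div_le_one_div_of_le (by positivity) h1'
    linarith
  · have key : c^2 * L * (L^2 - l^2) ≤ 8 * a^3 * l^2 := by
      rcases Nat.lt_or_ge n 2 with h | h
      · have hn1 : n = 1 := by omega
        subst hn1
        have ha : a = 0 := by simp [hadef]
        rw [ha]
        have hll : l = L := by rw [hldef, ha, sub_zero]
        rw [hll]; ring_nf; nlinarith
      · have hca : c ≤ a := by
          rw [hcdef, hadef]; exact Real.log_le_log (by norm_num) (by exact_mod_cast h)
        have hLal : L = a + l := by rw [hldef]; ring
        rw [hLal]
        have hc2al : c^2 ≤ a * l := by nlinarith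
        have hcl2 : c^2 ≤ l^2 := by nlinarith
        have hca2 : c^2 ≤ a^2 := by nlinarith
        nlinarith [mul_le_mul_of_nonneg_right hcl2 (pow_nonneg ha0 3),
          mul_le_mul_of_nonneg_right hc2al (mul_nonneg (mul_nonneg ha0 ha0) hl0.le),
          mul_le_mul_of_nonneg_right hca2 (mul_nonneg ha0 (mul_nonneg hl0.le hl0.le)),
          mul_nonneg (mul_nonneg (mul_nonneg ha0 ha0) ha0) (mul_nonneg hl0.le hl0.le)]
    have hdiff : 1 / ((n:ℝ)^2 * l^2) - 1 / ((n:ℝ)^2 * L^2)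
        = (L^2 - l^2) / ((n:ℝ)^2 * (l^2 * L^2)) := by
      field_simp
    rw [hdiff, div_le_div_iff₀ (by positivity) (by positivity)]
    have hc2 : (0:ℝ) < c^2 := by positivity
    have hfin : (L^2 - l^2) * L^3 ≤ 8*a^3*l^2*L^2/c^2 := by
      rw [le_div_iff₀ hc2]
      linarith [mul_le_mul_of_nonneg_right key (mul_pos hL0 hL0).le]
    calc (L^2 - l^2) * L^3 ≤ 8*a^3*l^2*L^2/c^2 := hfin
      _ = 8/c^2 * (a^3/(n:ℝ)^2) * ((n:ℝ)^2 * (l^2 * L^2)) := by field_simp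

open Finset

lemma basel_tail (N : ℕ) : Real.pi^2/6 - ∑ n ∈ Finset.Icc 1 N, 1/(n:ℝ)^2 ≤ 2/((N:ℝ)+1) := by
  have hsum : Summable (fun n : ℕ => 1/(n:ℝ)^2) := hasSum_zeta_two.summable
  have htsum : ∑' n : ℕ, 1/(n:ℝ)^2 = Real.pi^2/6 := hasSum_zeta_two.tsum_eq
  have hpart : ∑ n ∈ Finset.range (N+1), 1/(n:ℝ)^2 = ∑ n ∈ Finset.Icc 1 N, 1/(n:ℝ)^2 := by
    rw [Finset.range_eq_Ico, Finset.sum_eq_sum_Ico_succ_bot (Nat.succ_pos N)]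
    rw [← Finset.Ico_add_one_right_eq_Icc]
    simp
  have hshift := Summable.sum_add_tsum_nat_add (f := fun n : ℕ => 1/(n:ℝ)^2) (N+1) hsum
  have htail : ∑' i : ℕ, 1/((i + (N+1) : ℕ):ℝ)^2 ≤ 2/((N:ℝ)+1) := by
    refine Summable.tsum_le_of_sum_le ((summable_nat_add_iff (f := fun n : ℕ => 1/(n:ℝ)^2) (N+1)).2 hsum) ?_
    intro s
    obtain ⟨M, hM⟩ := s.exists_nat_subset_range
    calc ∑ k ∈ s, 1/((k + (N+1) : ℕ):ℝ)^2
        ≤ ∑ k ∈ Finset.range M, 1/((k + (N+1) : ℕ):ℝ)^2 := by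
          apply Finset.sum_le_sum_of_subset_of_nonneg hM
          intro i _ _; positivity
      _ = ∑ i ∈ Finset.Ico (N+1) (N+1+M), 1/((i:ℕ):ℝ)^2 := by
          rw [Finset.sum_Ico_eq_sum_range]
          simp [add_comm]
      _ = ∑ i ∈ Finset.Ioo N (N+1+M), ((i:ℝ)^2)⁻¹ := by
          rw [Finset.Ico_add_one_left_eq_Ioo]
          simp [one_div]
      _ ≤ 2/((N:ℝ)+1) := sum_Ioo_inv_sq_le N (N+1+M)
  rw [← htsum, ← hshift, hpart]
  push_cast at htail ⊢
  linarith

open Filter Asymptotics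
theorem sum_inv_nsq_logsq_asymptotic :
    (fun x : ℝ => (∑ n ∈ Finset.Icc 1 ⌊x / 2⌋₊, 1 / ((n : ℝ) ^ 2 * (Real.log (x / n)) ^ 2)) -
        (Real.pi ^ 2 / 6) * (1 / (Real.log x) ^ 2)) =O[atTop]
      (fun x : ℝ => 1 / (Real.log x) ^ 3) := by
  have hc : 0 < Real.log 2 := Real.log_pos (by norm_num)
  set S := ∑' n : ℕ, (Real.log n)^3/(n:ℝ)^2 with hSdef
  have hS0 : 0 ≤ S :=
    tsum_nonneg (fun n => div_nonneg (pow_nonneg (Real.log_natCast_nonneg n) 3) (by positivity))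
  rw [isBigO_iff]
  refine ⟨(8/Real.log 2^2) * S + 4, ?_⟩
  filter_upwards [eventually_ge_atTop (4:ℝ)] with x hx
  have hx0 : (0:ℝ) < x := by linarith
  set N := ⌊x / 2⌋₊ with hNdef
  set L := Real.log x with hLdef
  have hL1 : 1 ≤ L := by
    rw [hLdef, Real.le_log_iff_exp_le hx0]
    have := Real.exp_one_lt_d9
    linarith
  have hL0 : 0 < L := by linarith
  have hLx : L ≤ x := by
    have := Real.log_le_sub_one_of_pos hx0
    rw [hLdef]; linarith
  have hNx : (N:ℝ) ≤ x/2 := Nat.floor_le (by linarith)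
  have hNge : x/2 - 1 < (N:ℝ) := Nat.sub_one_lt_floor _
  set P := ∑ n ∈ Finset.Icc 1 N, 1/(n:ℝ)^2 with hPdef
  set A := ∑ n ∈ Finset.Icc 1 N, (1 / ((n:ℝ)^2 * (Real.log (x/n))^2) - 1/((n:ℝ)^2 * L^2)) with hAdef
  have hcast : ∀ n ∈ Finset.Icc 1 N, 1 ≤ n ∧ (n:ℝ) ≤ x/2 := by
    intro n hn
    rw [Finset.mem_Icc] at hn
    exact ⟨hn.1, le_trans (Nat.cast_le.mpr hn.2) hNx⟩
  -- split
  have hsplit : (∑ n ∈ Finset.Icc 1 N, 1 / ((n:ℝ)^2 * (Real.log (x/n))^2)) - Real.pi^2/6 * (1/L^2)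
      = A - (Real.pi^2/6 - P) * (1/L^2) := by
    rw [hAdef, Finset.sum_sub_distrib]
    have h1 : ∑ n ∈ Finset.Icc 1 N, 1/((n:ℝ)^2 * L^2) = P * (1/L^2) := by
      rw [hPdef, Finset.sum_mul]
      exact Finset.sum_congr rfl (fun n _ => (one_div_mul_one_div _ _).symm)
    rw [h1]; ring
  set u := 1/L^3 with hudef
  have hu0 : 0 ≤ u := by positivity
  -- bound A
  have hA0 : 0 ≤ A := Finset.sum_nonneg (fun n hn => (term_bound hx (hcast n hn).1 (hcast n hn).2).1)
  have hA2 : A ≤ (8/Real.log 2^2) * S * u := by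
    have step1 : A ≤ ∑ n ∈ Finset.Icc 1 N, (8/Real.log 2^2) * ((Real.log n)^3/(n:ℝ)^2) / L^3 :=
      Finset.sum_le_sum (fun n hn => (term_bound hx (hcast n hn).1 (hcast n hn).2).2)
    have step2 : ∑ n ∈ Finset.Icc 1 N, (8/Real.log 2^2) * ((Real.log n)^3/(n:ℝ)^2) / L^3
        = (8/Real.log 2^2) * (∑ n ∈ Finset.Icc 1 N, (Real.log n)^3/(n:ℝ)^2) * u := by
      rw [← Finset.sum_div, ← Finset.mul_sum, hudef]; ring
    have step3 : ∑ n ∈ Finset.Icc 1 N, (Real.log n)^3/(n:ℝ)^2 ≤ S :=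
      Summable.sum_le_tsum _ (fun n _ => div_nonneg (pow_nonneg (Real.log_natCast_nonneg n) 3) (by positivity))
        summable_logcube
    calc A ≤ _ := step1
      _ = _ := step2
      _ ≤ (8/Real.log 2^2) * S * u := by
          apply mul_le_mul_of_nonneg_right _ hu0
          apply mul_le_mul_of_nonneg_left step3 (by positivity)
  -- bound tail
  have hP : P ≤ Real.pi^2/6 := by
    rw [← hasSum_zeta_two.tsum_eq, hPdef]
    exact Summable.sum_le_tsum _ (fun n _ => by positivity) hasSum_zeta_two.summable
  have hB0 : 0 ≤ (Real.pi^2/6 - P) * (1/L^2) := by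
    apply mul_nonneg (by linarith) (by positivity)
  have hB2 : (Real.pi^2/6 - P) * (1/L^2) ≤ 4 * u := by
    have t1 : Real.pi^2/6 - P ≤ 2/((N:ℝ)+1) := basel_tail N
    have t2 : 2/((N:ℝ)+1) ≤ 4/x := by
      rw [div_le_div_iff₀ (by linarith) hx0]
      linarith
    have t3 : (Real.pi^2/6 - P) * (1/L^2) ≤ (4/x) * (1/L^2) :=
      mul_le_mul_of_nonneg_right (le_trans t1 t2) (by positivity)
    have t4 : (4/x) * (1/L^2) ≤ 4 * u := by
      rw [hudef]
      have h1 : (4/x) * (1/L^2) = 4/(x*L^2) := by ring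
      have h2 : 4 * (1/L^3) = 4/(L*L^2) := by ring
      rw [h1, h2]
      apply div_le_div_of_nonneg_left (by norm_num) (by positivity)
      apply mul_le_mul_of_nonneg_right hLx (by positivity)
    linarith
  -- conclude
  rw [Real.norm_eq_abs, Real.norm_eq_abs, hsplit]
  have habs : |(1:ℝ)/L^3| = u := by rw [hudef, abs_of_pos (by positivity)]
  rw [habs, abs_le]
  have hexp : ((8/Real.log 2^2) * S + 4) * u = (8/Real.log 2^2) * S * u + 4 * u := by ring
  have h4u : 0 ≤ 4 * u := by positivity
  have hSu : 0 ≤ (8/Real.log 2^2) * S * u := by positivity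
  constructor
  · rw [hexp]; linarith
  · rw [hexp]; linarith
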